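/- Let G be a finite simple graph all of whose IR(G)-sets are independent. If the IR-graph H of G is connected and has order at least three, then H contains a triangle or an induced 4-cycle C_4. -/

import Mathlib

open SimpleGraph

section IRDefs

variable {V : Type*}

/-- `w` is a `D`-private neighbour of `v`: `w` is dominated by `v` but by no other
vertex of `D`. -/
def IsPrivateNbr (G : SimpleGraph V) (D : Set V) (v w : V) : Prop :=
  (w = v ∨ G.Adj v w) ∧ ∀ u ∈ D, u ≠ v → ¬(w = u ∨ G.Adj u w)

/-- The set `PN(v, D)` of `D`-private neighbours of `v`. -/
def PN (G : SimpleGraph V) (v : V) (D : Set V) : Set V := {w | IsPrivateNbr G D v w}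

/-- The set `EPN(v, D) = PN(v, D) − D` of external `D`-private neighbours of `v`. -/
def EPN (G : SimpleGraph V) (v : V) (D : Set V) : Set V := PN G v D \ D

/-- A set `D` is irredundant if every vertex of `D` has a `D`-private neighbour. -/
def Irredundant (G : SimpleGraph V) (D : Set V) : Prop := ∀ v ∈ D, (PN G v D).Nonempty

/-- The upper irredundance number `IR(G)`. -/
noncomputable def IRnum (G : SimpleGraph V) : ℕ :=
  sSup {n | ∃ D : Set V, Irredundant G D ∧ D.ncard = n}

/-- An `IR(G)`-set: an irredundant set of maximum cardinality `IR(G)`. -/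
def IsIRSet (G : SimpleGraph V) (D : Set V) : Prop :=
  Irredundant G D ∧ D.ncard = IRnum G

/-- The `IR`-graph of `G`: vertices are the `IR(G)`-sets, and `D` is adjacent to `D'`
iff `D' = (D − {u}) ∪ {v}` for some `u ∈ D` and `v ∈ D' − {u}` with `uv ∈ E(G)`. -/
def IRGraph (G : SimpleGraph V) [Fintype V] :
    SimpleGraph {D : Set V // IsIRSet G D} where
  Adj D D' := ∃ a b, a ∈ D.1 ∧ b ∈ D'.1 ∧ b ≠ a ∧ G.Adj a b ∧ D'.1 = (D.1 \ {a}) ∪ {b}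
  symm := ⟨by
    rintro ⟨D, hD⟩ ⟨D', hD'⟩ ⟨a, b, ha, hb, hba, hadj, heq⟩
    dsimp only at ha hb heq ⊢
    have hbD : b ∉ D := by
      intro hbD
      have h1 : D' = D \ {a} := by
        rw [heq]
        ext x
        simp only [Set.mem_union, Set.mem_diff, Set.mem_singleton_iff]
        constructor
        · rintro (h | rfl)
          · exact h
          · exact ⟨hbD, hba⟩
        · exact Or.inl
      have h2 : D'.ncard = D.ncard - 1 := by
        rw [h1, Set.ncard_diff_singleton_of_mem ha]
      have h3 : D.ncard = D'.ncard := by rw [hD.2, hD'.2]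
      have h4 : 0 < D.ncard := (Set.ncard_pos (Set.toFinite D)).2 ⟨a, ha⟩
      omega
    refine ⟨b, a, hb, ha, fun h => hba h.symm, hadj.symm, ?_⟩
    rw [heq]
    ext x
    simp only [Set.mem_union, Set.mem_diff, Set.mem_singleton_iff]
    constructor
    · intro hx
      by_cases hxa : x = a
      · exact Or.inr hxa
      · have hxb : x ≠ b := fun h => hbD (h ▸ hx)
        exact Or.inl ⟨Or.inl ⟨hx, hxa⟩, hxb⟩
    · rintro (⟨(⟨hx, _⟩ | rfl), hxb⟩ | rfl)
      · exact hx
      · exact absurd rfl hxb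
      · exact ha⟩
  loopless := ⟨by
    rintro ⟨D, hD⟩ ⟨a, b, ha, hb, hba, hadj, heq⟩
    dsimp only at ha hb heq
    have h2 : a ∈ (D \ {a}) ∪ {b} := heq ▸ ha
    rcases h2 with h | h
    · exact h.2 rfl
    · exact hba h.symm⟩

end IRDefs


section Helpers

variable {V : Type*} [Fintype V]

lemma ncard_le_IRnum (G : SimpleGraph V) {D : Set V} (h : Irredundant G D) :
    D.ncard ≤ IRnum G := by
  apply le_csSup
  · refine ⟨Fintype.card V, ?_⟩
    rintro n ⟨D, -, rfl⟩
    have h1 : D.ncard ≤ (Set.univ : Set V).ncard :=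
      Set.ncard_le_ncard (Set.subset_univ D) Set.finite_univ
    simpa [Set.ncard_univ, Nat.card_eq_fintype_card] using h1
  · exact ⟨D, h, rfl⟩

lemma indep_irred (G : SimpleGraph V) {D : Set V}
    (h : ∀ p ∈ D, ∀ q ∈ D, ¬ G.Adj p q) : Irredundant G D := by
  intro v hv
  refine ⟨v, Or.inl rfl, ?_⟩
  intro t ht htv hdom
  rcases hdom with heq | hadj
  · exact htv heq.symm
  · exact h t ht v hv hadj

end Helpers

/-- If all `IR(G)`-sets are independent and the `IR`-graph of `G` is connected
of order at least three, then the `IR`-graph contains a triangle or an induced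
4-cycle. -/
theorem statement10 {V : Type*} [Fintype V] (G : SimpleGraph V)
    (hindep : ∀ D : Set V, IsIRSet G D → ∀ p ∈ D, ∀ q ∈ D, ¬ G.Adj p q)
    (hconn : (IRGraph G).Connected)
    (horder : 3 ≤ {D : Set V | IsIRSet G D}.ncard) :
    (∃ A B C, (IRGraph G).Adj A B ∧ (IRGraph G).Adj B C ∧ (IRGraph G).Adj A C) ∨
      Nonempty (SimpleGraph.cycleGraph 4 ↪g IRGraph G) := by
  classical
  -- Step 1: find a vertex with two distinct neighbours
  have key : ∃ B A C : {D : Set V // IsIRSet G D},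
      (IRGraph G).Adj B A ∧ (IRGraph G).Adj B C ∧ A ≠ C := by
    by_contra hno
    push_neg at hno
    have hreach : ∀ x y : {D : Set V // IsIRSet G D},
        (IRGraph G).Reachable x y → x = y ∨ (IRGraph G).Adj x y := by
      intro x y hxy
      obtain ⟨w⟩ := hxy
      induction w with
      | nil => exact Or.inl rfl
      | cons h p ih =>
        rcases ih with rfl | hadj
        · exact Or.inr h
        · exact Or.inl (hno _ _ _ h.symm hadj)
    obtain ⟨a, ha⟩ : {D : Set V | IsIRSet G D}.Nonempty :=
      Set.nonempty_of_ncard_ne_zero (by omega)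
    obtain ⟨b, hb⟩ : ({D : Set V | IsIRSet G D} \ {a}).Nonempty := by
      apply Set.nonempty_of_ncard_ne_zero
      rw [Set.ncard_diff_singleton_of_mem ha]
      omega
    obtain ⟨c, hc⟩ : (({D : Set V | IsIRSet G D} \ {a}) \ {b}).Nonempty := by
      apply Set.nonempty_of_ncard_ne_zero
      rw [Set.ncard_diff_singleton_of_mem hb, Set.ncard_diff_singleton_of_mem ha]
      omega
    set X : {D : Set V // IsIRSet G D} := ⟨a, ha⟩
    set Y : {D : Set V // IsIRSet G D} := ⟨b, hb.1⟩
    set Z : {D : Set V // IsIRSet G D} := ⟨c, hc.1.1⟩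
    have hXY : X ≠ Y := fun h => hb.2 (congrArg Subtype.val h).symm
    have hXZ : X ≠ Z := fun h => hc.1.2 (congrArg Subtype.val h).symm
    have hYZ : Y ≠ Z := fun h => hc.2 (congrArg Subtype.val h).symm
    have aXY : (IRGraph G).Adj X Y :=
      ((hreach X Y (hconn.preconnected X Y)).resolve_left hXY)
    have aXZ : (IRGraph G).Adj X Z :=
      ((hreach X Z (hconn.preconnected X Z)).resolve_left hXZ)
    exact hYZ (hno X Y Z aXY aXZ)
  obtain ⟨B, A, C, hBA, hBC, hAC⟩ := key
  obtain ⟨u, v, huB, hvA, hvu, huv, hA⟩ := id hBA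
  obtain ⟨x, y, hxB, hyC, hyx, hxy, hC⟩ := id hBC
  have hBind := hindep B.1 B.2
  have hAind := hindep A.1 A.2
  have hCind := hindep C.1 C.2
  -- v ∉ B and y ∉ B
  have hvB : v ∉ B.1 := by
    intro hvB
    have hsub : A.1 ⊆ B.1 := by
      rw [hA]; rintro w (⟨hw, -⟩ | hw)
      · exact hw
      · rwa [hw]
    have heq : A.1 = B.1 :=
      Set.eq_of_subset_of_ncard_le hsub (by rw [A.2.2, B.2.2])
    exact hBA.ne (Subtype.ext heq.symm)
  have hyB : y ∉ B.1 := by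
    intro hyB
    have hsub : C.1 ⊆ B.1 := by
      rw [hC]; rintro w (⟨hw, -⟩ | hw)
      · exact hw
      · rwa [hw]
    have heq : C.1 = B.1 :=
      Set.eq_of_subset_of_ncard_le hsub (by rw [C.2.2, B.2.2])
    exact hBC.ne (Subtype.ext heq.symm)
  have huA : u ∉ A.1 := by
    rw [hA]; rintro (⟨-, h⟩ | h)
    · exact h rfl
    · exact hvu h.symm
  have hxC : x ∉ C.1 := by
    rw [hC]; rintro (⟨-, h⟩ | h)
    · exact h rfl
    · exact hyx h.symm
  by_cases hux : u = x
  · -- Case u = x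
    subst hux
    have hvy : v ≠ y := by
      intro h
      exact hAC (Subtype.ext (by rw [hA, hC, h]))
    by_cases hady : G.Adj v y
    · -- triangle A B C
      left
      refine ⟨A, B, C, hBA.symm, hBC, ?_⟩
      refine ⟨v, y, hvA, hyC, fun h => hvy h.symm, hady, ?_⟩
      have hAv : A.1 \ {v} = B.1 \ {u} := by
        rw [hA]; ext w
        constructor
        · rintro ⟨hw1 | hw1, hw2⟩
          · exact hw1
          · exact absurd hw1 hw2
        · intro hw
          exact ⟨Or.inl hw, fun h => hvB (by rw [show v = w from h.symm]; exact hw.1)⟩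
      rw [hC, hAv]
    · -- larger irredundant set: contradiction
      exfalso
      set D : Set V := insert v (insert y (B.1 \ {u})) with hD
      have hsubA : B.1 \ {u} ⊆ A.1 := by rw [hA]; exact fun w h => Or.inl h
      have hsubC : B.1 \ {u} ⊆ C.1 := by rw [hC]; exact fun w h => Or.inl h
      have hDind : ∀ p ∈ D, ∀ q ∈ D, ¬ G.Adj p q := by
        rw [hD]
        rintro p (rfl | rfl | hp) q (rfl | rfl | hq) hadj
        · exact G.loopless.irrefl _ hadj
        · exact hady hadj
        · exact hAind _ hvA _ (hsubA hq) hadj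
        · exact hady hadj.symm
        · exact G.loopless.irrefl _ hadj
        · exact hCind _ hyC _ (hsubC hq) hadj
        · exact hAind _ hvA _ (hsubA hp) hadj.symm
        · exact hCind _ hyC _ (hsubC hp) hadj.symm
        · exact hBind _ hp.1 _ hq.1 hadj
      have hcard : D.ncard = IRnum G + 1 := by
        have e1 : (B.1 \ {u}).ncard = B.1.ncard - 1 :=
          Set.ncard_diff_singleton_of_mem huB
        have e2 : (insert y (B.1 \ {u})).ncard = (B.1 \ {u}).ncard + 1 :=
          Set.ncard_insert_of_notMem (fun h => hyB h.1)
        have e3 : D.ncard = (insert y (B.1 \ {u})).ncard + 1 := by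
          rw [hD]
          exact Set.ncard_insert_of_notMem (by rintro (rfl | h); exacts [hvy rfl, hvB h.1])
        have h0 : 0 < B.1.ncard := (Set.ncard_pos (Set.toFinite _)).2 ⟨u, huB⟩
        have hBn := B.2.2
        omega
      have := ncard_le_IRnum G (indep_irred G hDind)
      omega
  · -- Case u ≠ x
    have hxA : x ∈ A.1 := by rw [hA]; exact Or.inl ⟨hxB, fun h => hux h.symm⟩
    have huC : u ∈ C.1 := by rw [hC]; exact Or.inl ⟨huB, fun h => hux h⟩
    have hvy : v ≠ y := by
      rintro rfl
      exact hAind _ hvA _ hxA hxy.symm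
    set D : Set V := insert v (insert y ((B.1 \ {u}) \ {x})) with hD
    have hxBu : x ∈ B.1 \ {u} := ⟨hxB, fun h => hux h.symm⟩
    have hsubA : (B.1 \ {u}) \ {x} ⊆ A.1 := by rw [hA]; exact fun w h => Or.inl h.1
    have hsubC : (B.1 \ {u}) \ {x} ⊆ C.1 := by
      rw [hC]; exact fun w h => Or.inl ⟨h.1.1, h.2⟩
    have hvD : v ∈ D := by rw [hD]; exact Or.inl rfl
    have hyD : y ∈ D := by rw [hD]; exact Or.inr (Or.inl rfl)
    have hDcard : D.ncard = IRnum G := by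
      have e1 : (B.1 \ {u}).ncard = B.1.ncard - 1 :=
        Set.ncard_diff_singleton_of_mem huB
      have e2 : ((B.1 \ {u}) \ {x}).ncard = (B.1 \ {u}).ncard - 1 :=
        Set.ncard_diff_singleton_of_mem hxBu
      have e3 : (insert y ((B.1 \ {u}) \ {x})).ncard = ((B.1 \ {u}) \ {x}).ncard + 1 :=
        Set.ncard_insert_of_notMem (fun h => hyB h.1.1)
      have e4 : D.ncard = (insert y ((B.1 \ {u}) \ {x})).ncard + 1 := by
        rw [hD]
        exact Set.ncard_insert_of_notMem (by rintro (rfl | h); exacts [hvy rfl, hvB h.1.1])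
      have h0 : 0 < (B.1 \ {u}).ncard := (Set.ncard_pos (Set.toFinite _)).2 ⟨x, hxBu⟩
      have h1 : 0 < B.1.ncard := (Set.ncard_pos (Set.toFinite _)).2 ⟨u, huB⟩
      have hBn := B.2.2
      omega
    by_cases hady : G.Adj v y
    · -- D is irredundant but not independent: contradiction
      exfalso
      have hirr : Irredundant G D := by
        rw [hD]
        rintro w (rfl | rfl | hw)
        · -- w = v, private neighbour u
          refine ⟨u, Or.inr huv.symm, ?_⟩
          intro t ht htv hdom
          rcases ht with rfl | rfl | htB
          · exact htv rfl
          · rcases hdom with h | h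
            · exact hyB (by rw [← h]; exact huB)
            · exact hCind _ hyC _ huC h
          · rcases hdom with h | h
            · exact htB.1.2 h.symm
            · exact hBind _ htB.1.1 _ huB h
        · -- w = y, private neighbour x
          refine ⟨x, Or.inr hxy.symm, ?_⟩
          intro t ht htv hdom
          rcases ht with rfl | rfl | htB
          · rcases hdom with h | h
            · exact hvB (by rw [← h]; exact hxB)
            · exact hAind _ hvA _ hxA h
          · exact htv rfl
          · rcases hdom with h | h
            · exact htB.2 h.symm
            · exact hBind _ htB.1.1 _ hxB h
        · -- w ∈ B \ {u} \ {x}, self private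
          refine ⟨w, Or.inl rfl, ?_⟩
          intro t ht htw hdom
          rcases ht with rfl | rfl | htB
          · rcases hdom with h | h
            · exact hvB (by rw [← h]; exact hw.1.1)
            · exact hAind _ hvA _ (hsubA hw) h
          · rcases hdom with h | h
            · exact hyB (by rw [← h]; exact hw.1.1)
            · exact hCind _ hyC _ (hsubC hw) h
          · rcases hdom with h | h
            · exact htw (h.symm)
            · exact hBind _ htB.1.1 _ hw.1.1 h
      have hDIR : IsIRSet G D := ⟨hirr, hDcard⟩
      exact hindep D hDIR v hvD y hyD hady
    · -- induced C4 on B, A, D, C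
      right
      have hDind : ∀ p ∈ D, ∀ q ∈ D, ¬ G.Adj p q := by
        rw [hD]
        rintro p (rfl | rfl | hp) q (rfl | rfl | hq) hadj
        · exact G.loopless.irrefl _ hadj
        · exact hady hadj
        · exact hAind _ hvA _ (hsubA hq) hadj
        · exact hady hadj.symm
        · exact G.loopless.irrefl _ hadj
        · exact hCind _ hyC _ (hsubC hq) hadj
        · exact hAind _ hvA _ (hsubA hp) hadj.symm
        · exact hCind _ hyC _ (hsubC hp) hadj.symm
        · exact hBind _ hp.1.1 _ hq.1.1 hadj
      have hDIR : IsIRSet G D := ⟨indep_irred G hDind, hDcard⟩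
      set DD : {E : Set V // IsIRSet G E} := ⟨D, hDIR⟩ with hDD
      have hAD : D = A.1 \ {x} ∪ {y} := by
        rw [hD, hA]
        ext w
        simp only [Set.mem_insert_iff, Set.mem_union, Set.mem_diff, Set.mem_singleton_iff]
        constructor
        · rintro (rfl | rfl | ⟨⟨hwB, hwu⟩, hwx⟩)
          · exact Or.inl ⟨Or.inr rfl, fun h => hvB (by rw [h]; exact hxB)⟩
          · exact Or.inr rfl
          · exact Or.inl ⟨Or.inl ⟨hwB, hwu⟩, hwx⟩
        · rintro (⟨⟨hwB, hwu⟩ | rfl, hwx⟩ | rfl)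
          · exact Or.inr (Or.inr ⟨⟨hwB, hwu⟩, hwx⟩)
          · exact Or.inl rfl
          · exact Or.inr (Or.inl rfl)
      have hCD : D = C.1 \ {u} ∪ {v} := by
        rw [hD, hC]
        ext w
        simp only [Set.mem_insert_iff, Set.mem_union, Set.mem_diff, Set.mem_singleton_iff]
        constructor
        · rintro (rfl | rfl | ⟨⟨hwB, hwu⟩, hwx⟩)
          · exact Or.inr rfl
          · exact Or.inl ⟨Or.inr rfl, fun h => hyB (by rw [h]; exact huB)⟩
          · exact Or.inl ⟨Or.inl ⟨hwB, hwx⟩, hwu⟩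
        · rintro (⟨⟨hwB, hwx⟩ | rfl, hwu⟩ | rfl)
          · exact Or.inr (Or.inr ⟨⟨hwB, hwu⟩, hwx⟩)
          · exact Or.inr (Or.inl rfl)
          · exact Or.inl rfl
      have hADD : (IRGraph G).Adj A DD :=
        ⟨x, y, hxA, hyD, fun h => hyB (by rw [h]; exact hxB), hxy, hAD⟩
      have hCDD : (IRGraph G).Adj C DD := ⟨u, v, huC, hvD, hvu, huv, hCD⟩
      have hyA : y ∉ A.1 := by
        rw [hA]; rintro (h | h)
        · exact hyB h.1
        · exact hvy h.symm
      have hnAC : ¬ (IRGraph G).Adj A C := by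
        rintro ⟨a, b, haA, hbC, hba, hab, heq⟩
        have h1 : u ∈ A.1 \ {a} ∪ {b} := heq ▸ huC
        have h2 : y ∈ A.1 \ {a} ∪ {b} := heq ▸ hyC
        have hub : u = b := by
          rcases h1 with h | h
          · exact absurd h.1 huA
          · exact h
        have hyb : y = b := by
          rcases h2 with h | h
          · exact absurd h.1 hyA
          · exact h
        exact hyB (by rw [hyb, ← hub]; exact huB)
      have hnBDD : ¬ (IRGraph G).Adj B DD := by
        rintro ⟨a, b, haB, hbD, hba, hab, heq⟩
        have h1 : v ∈ B.1 \ {a} ∪ {b} := heq ▸ hvD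
        have h2 : y ∈ B.1 \ {a} ∪ {b} := heq ▸ hyD
        have hvb : v = b := by
          rcases h1 with h | h
          · exact absurd h.1 hvB
          · exact h
        have hyb : y = b := by
          rcases h2 with h | h
          · exact absurd h.1 hyB
          · exact h
        exact hvy (by rw [hvb, hyb])
      have hBDD : B ≠ DD := fun h => hvB (by rw [show B.1 = DD.1 from congrArg Subtype.val h]; exact hvD)
      have hBA' : B ≠ A := hBA.ne
      have hBC' : B ≠ C := hBC.ne
      have hADD' : A ≠ DD := hADD.ne
      have hCDD' : C ≠ DD := hCDD.ne
      refine ⟨⟨⟨![B, A, DD, C], ?_⟩, ?_⟩⟩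
      · intro i j hij
        fin_cases i <;> fin_cases j <;>
          simp only [Matrix.cons_val_zero, Matrix.cons_val_one, Matrix.head_cons,
            Matrix.cons_val_two, Matrix.tail_cons, Matrix.cons_val_three] at hij <;>
          first
            | rfl
            | exact absurd hij hBA'
            | exact absurd hij hBDD
            | exact absurd hij hBC'
            | exact absurd hij hBA'.symm
            | exact absurd hij hADD'
            | exact absurd hij hAC
            | exact absurd hij hBDD.symm
            | exact absurd hij hADD'.symm
            | exact absurd hij hCDD'.symm
            | exact absurd hij hBC'.symm
            | exact absurd hij hAC.symm
            | exact absurd hij hCDD'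
      · intro i j
        fin_cases i <;> fin_cases j
        · exact iff_of_false ((IRGraph G).loopless.irrefl _) (by decide)
        · exact iff_of_true hBA (by decide)
        · exact iff_of_false hnBDD (by decide)
        · exact iff_of_true hBC (by decide)
        · exact iff_of_true hBA.symm (by decide)
        · exact iff_of_false ((IRGraph G).loopless.irrefl _) (by decide)
        · exact iff_of_true hADD (by decide)
        · exact iff_of_false hnAC (by decide)
        · exact iff_of_false (fun h => hnBDD h.symm) (by decide)
        · exact iff_of_true hADD.symm (by decide)
        · exact iff_of_false ((IRGraph G).loopless.irrefl _) (by decide)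
        · exact iff_of_true hCDD.symm (by decide)
        · exact iff_of_true hBC.symm (by decide)
        · exact iff_of_false (fun h => hnAC h.symm) (by decide)
        · exact iff_of_true hCDD (by decide)
        · exact iff_of_false ((IRGraph G).loopless.irrefl _) (by decide)
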